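/- Define the physicists' Hermite polynomial of order n by H_n(x) := (−1)^n e^{x²} · (d^n/dx^n) e^{−x²}. Then for every n ∈ ℕ and every y ∈ ℝ, ∫_ℝ e^{−(x−y)²/2} e^{−x²/2} H_n(x) dx = √π · e^{−y²/4} · y^n. -/

import Mathlib

open Real

/-- The physicists' Hermite polynomial `H n x = (-1)^n e^{x²} (d/dx)^n e^{-x²}`. -/
noncomputable def physHermite (n : ℕ) (x : ℝ) : ℝ :=
  (-1) ^ n * Real.exp (x ^ 2) * iteratedDeriv n (fun y => Real.exp (-y ^ 2)) x


open Real MeasureTheory Filter Polynomial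

lemma abs_pow_le_one_add (x : ℝ) (k : ℕ) : |x| ^ k ≤ 1 + x ^ (2 * k) := by
  have hx2 : x ^ (2 * k) = |x| ^ (2 * k) := by
    rw [pow_mul, pow_mul, sq_abs]
  rw [hx2]
  rcases le_total |x| 1 with h | h
  · have : |x| ^ k ≤ 1 := pow_le_one₀ (abs_nonneg x) h
    have h2 : (0:ℝ) ≤ |x| ^ (2 * k) := by positivity
    linarith
  · have : |x| ^ k ≤ |x| ^ (2 * k) := pow_le_pow_right₀ h (by omega)
    linarith

lemma integrable_even_pow_gauss (k : ℕ) :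
    Integrable (fun x : ℝ => x ^ (2 * k) * Real.exp (-1 * x ^ 2)) := by
  have h := integrable_rpow_mul_exp_neg_mul_sq (b := 1) one_pos
    (s := ((2 * k : ℕ) : ℝ)) ((by norm_num : (-1:ℝ) < 0).trans_le (Nat.cast_nonneg _))
  refine h.congr (Eventually.of_forall fun x => ?_)
  simp only [Real.rpow_natCast]

lemma bound_integrable (c : ℝ) (k : ℕ) :
    Integrable (fun x : ℝ => |c| * ((1 + x ^ (2 * k)) * Real.exp (-1 * x ^ 2))) := by
  refine Integrable.const_mul ?_ _
  simpa [add_mul, Pi.add_def] using (integrable_exp_neg_mul_sq (b := (1:ℝ)) one_pos).add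
    (integrable_even_pow_gauss k)

lemma norm_monomial_le (c : ℝ) (k : ℕ) (x : ℝ) :
    ‖c * x ^ k * Real.exp (-x ^ 2)‖ ≤ |c| * ((1 + x ^ (2 * k)) * Real.exp (-1 * x ^ 2)) := by
  rw [norm_mul, norm_mul, Real.norm_eq_abs, Real.norm_eq_abs, Real.norm_eq_abs,
    abs_of_nonneg (Real.exp_pos _).le, abs_pow, neg_one_mul, mul_assoc]
  exact mul_le_mul_of_nonneg_left
    (mul_le_mul_of_nonneg_right (abs_pow_le_one_add x k) (Real.exp_pos _).le) (abs_nonneg c)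

lemma integrable_poly_gauss (p : Polynomial ℝ) :
    Integrable (fun x : ℝ => p.eval x * Real.exp (-x ^ 2)) := by
  induction p using Polynomial.induction_on' with
  | add p q hp hq => simpa [add_mul, Pi.add_def] using hp.add hq
  | monomial k c =>
    refine (bound_integrable c k).mono' ?_ ?_
    · exact (Continuous.mul (by continuity) (by continuity)).aestronglyMeasurable
    · filter_upwards with x
      simpa [eval_monomial] using norm_monomial_le c k x

lemma tendsto_bound : ∀ (c : ℝ) (k : ℕ),
    Tendsto (fun x : ℝ => |c| * ((1 + x ^ (2 * k)) * Real.exp (-1 * x ^ 2)))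
      (cocompact ℝ) (nhds 0) := by
  intro c k
  have h1 : Tendsto (fun x : ℝ => Real.exp (-1 * x ^ 2)) (cocompact ℝ) (nhds 0) := by
    have h := tendsto_rpow_abs_mul_exp_neg_mul_sq_cocompact (a := 1) one_pos 0
    have hev : ∀ᶠ x : ℝ in cocompact ℝ, |x| ^ (0:ℝ) * Real.exp (-1 * x ^ 2)
        = Real.exp (-1 * x ^ 2) := by
      have : ∀ᶠ x : ℝ in cocompact ℝ, x ≠ 0 := by
        have := (isCompact_singleton (x := (0:ℝ))).compl_mem_cocompact
        filter_upwards [this] with x hx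
        simpa using hx
      filter_upwards [this] with x hx
      rw [Real.rpow_zero, one_mul]
    exact (h.congr' hev)
  have h2 : Tendsto (fun x : ℝ => x ^ (2 * k) * Real.exp (-1 * x ^ 2)) (cocompact ℝ) (nhds 0) := by
    have h := tendsto_rpow_abs_mul_exp_neg_mul_sq_cocompact (a := 1) one_pos ((2 * k : ℕ) : ℝ)
    refine h.congr fun x => ?_
    rw [Real.rpow_natCast, pow_mul, pow_mul, sq_abs]
  have := ((h1.add h2).const_mul |c|)
  simpa [add_mul, mul_add] using this

lemma tendsto_poly_gauss (p : Polynomial ℝ) :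
    Tendsto (fun x : ℝ => p.eval x * Real.exp (-x ^ 2)) (cocompact ℝ) (nhds 0) := by
  induction p using Polynomial.induction_on' with
  | add p q hp hq => simpa [add_mul] using hp.add hq
  | monomial k c =>
    rw [tendsto_zero_iff_norm_tendsto_zero]
    refine squeeze_zero (fun x => norm_nonneg _) (fun x => ?_) (tendsto_bound c k)
    simpa [eval_monomial] using norm_monomial_le c k x

noncomputable def gaussP : ℕ → Polynomial ℝ
  | 0 => 1
  | n + 1 => (gaussP n).derivative - Polynomial.C 2 * Polynomial.X * gaussP n

lemma hasDerivAt_gauss (x : ℝ) :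
    HasDerivAt (fun x : ℝ => Real.exp (-x ^ 2)) (Real.exp (-x ^ 2) * -(2 * x)) x := by
  simpa using ((hasDerivAt_pow 2 x).neg).exp

lemma iteratedDeriv_gauss_eq (n : ℕ) (x : ℝ) :
    iteratedDeriv n (fun y => Real.exp (-y ^ 2)) x = (gaussP n).eval x * Real.exp (-x ^ 2) := by
  induction n generalizing x with
  | zero => simp [gaussP]
  | succ n ih =>
    rw [iteratedDeriv_succ]
    have hrep : iteratedDeriv n (fun y => Real.exp (-y ^ 2)) =
        fun x => (gaussP n).eval x * Real.exp (-x ^ 2) := funext ih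
    rw [hrep]
    have h := ((gaussP n).hasDerivAt x).mul (hasDerivAt_gauss x)
    rw [show (fun x => (gaussP n).eval x * Real.exp (-x ^ 2)) =
      (fun x => (gaussP n).eval x) * (fun x => Real.exp (-x ^ 2)) from rfl, h.deriv]
    simp [gaussP]
    ring

lemma hasDerivAt_iteratedDeriv_gauss (n : ℕ) (x : ℝ) :
    HasDerivAt (iteratedDeriv n (fun y => Real.exp (-y ^ 2)))
      (iteratedDeriv (n + 1) (fun y => Real.exp (-y ^ 2)) x) x := by
  have hrep : iteratedDeriv n (fun y : ℝ => Real.exp (-y ^ 2)) =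
      fun x => (gaussP n).eval x * Real.exp (-x ^ 2) :=
    funext (iteratedDeriv_gauss_eq n)
  rw [hrep]
  have h := ((gaussP n).hasDerivAt x).mul (hasDerivAt_gauss x)
  refine h.congr_deriv ?_
  rw [iteratedDeriv_gauss_eq]
  simp [gaussP]
  ring

lemma shift_eq (n : ℕ) (y x : ℝ) :
    Real.exp (y ^ 2 / 4) *
      (((gaussP n).comp (Polynomial.X + Polynomial.C (y / 2))).eval (x - y / 2) *
        Real.exp (-(x - y / 2) ^ 2)) =
    Real.exp (x * y) * iteratedDeriv n (fun t => Real.exp (-t ^ 2)) x := by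
  rw [iteratedDeriv_gauss_eq, Polynomial.eval_comp]
  simp only [Polynomial.eval_add, Polynomial.eval_X, Polynomial.eval_C, sub_add_cancel]
  rw [show Real.exp (y ^ 2 / 4) * ((gaussP n).eval x * Real.exp (-(x - y / 2) ^ 2))
      = (gaussP n).eval x * (Real.exp (y ^ 2 / 4) * Real.exp (-(x - y / 2) ^ 2)) by ring,
    ← Real.exp_add,
    show Real.exp (x * y) * ((gaussP n).eval x * Real.exp (-x ^ 2))
      = (gaussP n).eval x * (Real.exp (x * y) * Real.exp (-x ^ 2)) by ring, ← Real.exp_add]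
  ring_nf

lemma integrable_h (n : ℕ) (y : ℝ) :
    Integrable (fun x : ℝ => Real.exp (x * y) * iteratedDeriv n (fun t => Real.exp (-t ^ 2)) x) := by
  have hF := integrable_poly_gauss ((gaussP n).comp (Polynomial.X + Polynomial.C (y / 2)))
  have h2 := (hF.comp_sub_right (y / 2)).const_mul (Real.exp (y ^ 2 / 4))
  exact h2.congr (Eventually.of_forall fun x => shift_eq n y x)

lemma tendsto_h (n : ℕ) (y : ℝ) :
    Tendsto (fun x : ℝ => Real.exp (x * y) * iteratedDeriv n (fun t => Real.exp (-t ^ 2)) x)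
      (cocompact ℝ) (nhds 0) := by
  have hF := tendsto_poly_gauss ((gaussP n).comp (Polynomial.X + Polynomial.C (y / 2)))
  have hsub : Tendsto (fun x : ℝ => x - y / 2) (cocompact ℝ) (cocompact ℝ) := by
    have : Tendsto (⇑(Homeomorph.subRight (y / 2))) (cocompact ℝ) (cocompact ℝ) := by
      rw [Tendsto, Homeomorph.map_cocompact]
    exact this
  have h2 := ((hF.comp hsub).const_mul (Real.exp (y ^ 2 / 4)))
  rw [mul_zero] at h2
  exact h2.congr fun x => shift_eq n y x

lemma gauss_complete_square (y x : ℝ) :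
    Real.exp (x * y) * Real.exp (-x ^ 2)
      = Real.exp (y ^ 2 / 4) * Real.exp (-(x - y / 2) ^ 2) := by
  rw [← Real.exp_add, ← Real.exp_add]
  ring_nf

lemma key_integral (n : ℕ) (y : ℝ) :
    ∫ x : ℝ, Real.exp (x * y) * iteratedDeriv n (fun t => Real.exp (-t ^ 2)) x
      = (-y) ^ n * Real.exp (y ^ 2 / 4) * Real.sqrt π := by
  induction n with
  | zero =>
    simp only [iteratedDeriv_zero, pow_zero, one_mul]
    calc ∫ x : ℝ, Real.exp (x * y) * Real.exp (-x ^ 2)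
        = ∫ x : ℝ, Real.exp (y ^ 2 / 4) * Real.exp (-(x - y / 2) ^ 2) := by
          exact integral_congr_ae (Eventually.of_forall fun x => gauss_complete_square y x)
      _ = Real.exp (y ^ 2 / 4) * ∫ x : ℝ, Real.exp (-(x - y / 2) ^ 2) := by
          rw [integral_const_mul]
      _ = Real.exp (y ^ 2 / 4) * ∫ x : ℝ, Real.exp (-x ^ 2) := by
          rw [integral_sub_right_eq_self (fun x : ℝ => Real.exp (-x ^ 2)) (y / 2)]
      _ = Real.exp (y ^ 2 / 4) * Real.sqrt π := by
          have h := integral_gaussian 1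
          simp only [one_mul, neg_one_mul, div_one] at h
          rw [show (fun x : ℝ => Real.exp (-x ^ 2)) = fun x : ℝ => Real.exp (-(1:ℝ) * x ^ 2) by
            funext x; rw [neg_one_mul], ← h]
          norm_num
  | succ n ih =>
    set f : ℝ → ℝ := fun t => Real.exp (-t ^ 2) with hf
    set G' : ℝ → ℝ := fun x =>
      Real.exp (x * y) * y * iteratedDeriv n f x + Real.exp (x * y) * iteratedDeriv (n + 1) f x
      with hG'
    have hDeriv : ∀ x, HasDerivAt (fun x => Real.exp (x * y) * iteratedDeriv n f x) (G' x) x :=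
      fun x => ((hasDerivAt_mul_const y).exp).mul (hasDerivAt_iteratedDeriv_gauss n x)
    have hG'int : Integrable G' := by
      have := (((integrable_h n y).const_mul y).add (integrable_h (n + 1) y))
      exact this.congr (Eventually.of_forall fun x => by simp only [hG', hf, Pi.add_apply]; ring)
    have hbot : Tendsto (fun x => Real.exp (x * y) * iteratedDeriv n f x) atBot (nhds 0) :=
      (tendsto_h n y).mono_left (by rw [cocompact_eq_atBot_atTop]; exact le_sup_left)
    have htop : Tendsto (fun x => Real.exp (x * y) * iteratedDeriv n f x) atTop (nhds 0) :=
      (tendsto_h n y).mono_left (by rw [cocompact_eq_atBot_atTop]; exact le_sup_right)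
    have hFTC : ∫ x : ℝ, G' x = 0 - 0 :=
      MeasureTheory.integral_of_hasDerivAt_of_tendsto hDeriv hG'int hbot htop
    have hsplit : ∫ x : ℝ, Real.exp (x * y) * iteratedDeriv (n + 1) f x
        = (∫ x : ℝ, G' x) - ∫ x : ℝ, y * (Real.exp (x * y) * iteratedDeriv n f x) := by
      rw [← integral_sub hG'int ((integrable_h n y).const_mul y)]
      exact integral_congr_ae (Eventually.of_forall fun x => by simp only [hG']; ring)
    rw [hsplit, hFTC, MeasureTheory.integral_const_mul, ih, pow_succ]
    ring

theorem integral_kernel_physHermite' (n : ℕ) (y : ℝ) :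
    ∫ x : ℝ, Real.exp (-(x - y) ^ 2 / 2) * Real.exp (-x ^ 2 / 2) *
        ((-1) ^ n * Real.exp (x ^ 2) * iteratedDeriv n (fun t => Real.exp (-t ^ 2)) x)
      = Real.sqrt π * Real.exp (-y ^ 2 / 4) * y ^ n := by
  have hpt : ∀ x : ℝ, Real.exp (-(x - y) ^ 2 / 2) * Real.exp (-x ^ 2 / 2) *
        ((-1) ^ n * Real.exp (x ^ 2) * iteratedDeriv n (fun t => Real.exp (-t ^ 2)) x)
      = ((-1 : ℝ) ^ n * Real.exp (-y ^ 2 / 2)) *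
        (Real.exp (x * y) * iteratedDeriv n (fun t => Real.exp (-t ^ 2)) x) := by
    intro x
    have hexp : Real.exp (-(x - y) ^ 2 / 2) * Real.exp (-x ^ 2 / 2) * Real.exp (x ^ 2)
        = Real.exp (-y ^ 2 / 2) * Real.exp (x * y) := by
      rw [← Real.exp_add, ← Real.exp_add, ← Real.exp_add]
      ring_nf
    calc Real.exp (-(x - y) ^ 2 / 2) * Real.exp (-x ^ 2 / 2) *
          ((-1) ^ n * Real.exp (x ^ 2) * iteratedDeriv n (fun t => Real.exp (-t ^ 2)) x)
        = (Real.exp (-(x - y) ^ 2 / 2) * Real.exp (-x ^ 2 / 2) * Real.exp (x ^ 2)) *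
          ((-1 : ℝ) ^ n * iteratedDeriv n (fun t => Real.exp (-t ^ 2)) x) := by ring
      _ = _ := by rw [hexp]; ring
  calc ∫ x : ℝ, Real.exp (-(x - y) ^ 2 / 2) * Real.exp (-x ^ 2 / 2) *
        ((-1) ^ n * Real.exp (x ^ 2) * iteratedDeriv n (fun t => Real.exp (-t ^ 2)) x)
      = ∫ x : ℝ, ((-1 : ℝ) ^ n * Real.exp (-y ^ 2 / 2)) *
        (Real.exp (x * y) * iteratedDeriv n (fun t => Real.exp (-t ^ 2)) x) :=
        integral_congr_ae (Eventually.of_forall hpt)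
    _ = ((-1 : ℝ) ^ n * Real.exp (-y ^ 2 / 2)) *
        ((-y) ^ n * Real.exp (y ^ 2 / 4) * Real.sqrt π) := by
        rw [integral_const_mul, key_integral]
    _ = Real.sqrt π * Real.exp (-y ^ 2 / 4) * y ^ n := by
        rw [show ((-1 : ℝ) ^ n * Real.exp (-y ^ 2 / 2)) *
            ((-y) ^ n * Real.exp (y ^ 2 / 4) * Real.sqrt π)
          = ((-1 : ℝ) ^ n * (-y) ^ n) * (Real.exp (-y ^ 2 / 2) * Real.exp (y ^ 2 / 4))
            * Real.sqrt π by ring, ← mul_pow, ← Real.exp_add]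
        norm_num
        ring

/-- `∫ e^{-(x-y)²/2} e^{-x²/2} H n x dx = √π e^{-y²/4} y^n`. -/
theorem integral_kernel_physHermite (n : ℕ) (y : ℝ) :
    ∫ x : ℝ, Real.exp (-(x - y) ^ 2 / 2) * Real.exp (-x ^ 2 / 2) * physHermite n x
      = Real.sqrt π * Real.exp (-y ^ 2 / 4) * y ^ n := by
  simp only [physHermite]
  exact integral_kernel_physHermite' n y
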